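/- Let n be a natural number and u ∈ K_∞ with |u|_∞ < q^n. Then the family indexed by i ∈ ℕ with term u^{q^{i+1}} / (θ^{q^{i+1}} − θ)^n (i.e. the terms of the series ∑_{i≥1} u^{q^i}/(θ^{q^i} − θ)^n defining the n-th Kochubei polylogarithm at u) is summable in K_∞. -/

import Mathlib

open FunctionField
open scoped Multiplicative

/-- The canonical ring homomorphism from `K = 𝔽_q(θ)` into its completion
`K_∞ = 𝔽_q((1/θ))` at the infinite place. -/
noncomputable def ratFuncToFqtInfty (Fq : Type*) [Field Fq] [DecidableEq (RatFunc Fq)] :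
    RatFunc Fq →+* RatFunc.CompletionAtInfty Fq :=
  letI := RatFunc.inftyValued Fq
  UniformSpace.Completion.coeRingHom

/-- Any valued ring is a nonarchimedean additive group. -/
theorem kochubei_aux_nonarch {R Γ₀ : Type*} [Ring R] [LinearOrderedCommGroupWithZero Γ₀]
    [vR : Valued R Γ₀] : NonarchimedeanAddGroup R where
  is_nonarchimedean := by
    intro U hU
    obtain ⟨γ, hγ⟩ := Valued.mem_nhds_zero.mp hU
    refine ⟨⟨vR.v.restrict.ltAddSubgroup γ, ?_⟩, hγ⟩
    exact AddSubgroup.isOpen_of_mem_nhds _ (Valued.mem_nhds_zero.mpr ⟨γ, fun _ h => h⟩)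

/-- Valuation of `θ^m - θ` in `RatFunc.CompletionAtInfty Fq` equals `q^m` for `m ≥ 2`. -/
theorem kochubei_aux_den (Fq : Type*) [Field Fq] [Fintype Fq] [DecidableEq (RatFunc Fq)]
    {m : ℕ} (hm : 2 ≤ m) :
    Valued.v (ratFuncToFqtInfty Fq RatFunc.X ^ m - ratFuncToFqtInfty Fq RatFunc.X)
      = (↑(Multiplicative.ofAdd (m : ℤ)) : WithZero (Multiplicative ℤ)) := by
  letI := RatFunc.inftyValued Fq
  have h1 : ratFuncToFqtInfty Fq RatFunc.X ^ m - ratFuncToFqtInfty Fq RatFunc.X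
      = ratFuncToFqtInfty Fq (RatFunc.X ^ m - RatFunc.X) := by
    rw [map_sub, map_pow]
  have hdegX : (Polynomial.X : Polynomial Fq).natDegree < (Polynomial.X ^ m : Polynomial Fq).natDegree := by
    rw [Polynomial.natDegree_X_pow, Polynomial.natDegree_X]
    omega
  have hdeg : ((Polynomial.X : Polynomial Fq) ^ m - Polynomial.X).natDegree = m := by
    rw [Polynomial.natDegree_sub_eq_left_of_natDegree_lt hdegX, Polynomial.natDegree_X_pow]
  have hp : ((Polynomial.X : Polynomial Fq) ^ m - Polynomial.X) ≠ 0 := by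
    intro h
    rw [h, Polynomial.natDegree_zero] at hdeg
    omega
  have halg : algebraMap (Polynomial Fq) (RatFunc Fq) (Polynomial.X ^ m - Polynomial.X)
      = RatFunc.X ^ m - RatFunc.X := by
    rw [map_sub, map_pow, RatFunc.algebraMap_X]
  have key : Valued.v (ratFuncToFqtInfty Fq (RatFunc.X ^ m - RatFunc.X))
      = Valued.v (RatFunc.X ^ m - RatFunc.X : RatFunc Fq) :=
    @Valued.valuedCompletion_apply (RatFunc Fq) _ _ _ (RatFunc.inftyValued Fq) _
  rw [h1, key]
  rw [RatFunc.inftyValued.def, ← halg, RatFunc.inftyValuation.polynomial Fq hp, hdeg, WithZero.exp]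

/-- For `u ∈ K_∞` with `|u|_∞ < q^n`, the family of terms
`u^{q^{i+1}} / (θ^{q^{i+1}} - θ)^n` (the terms of the series `∑_{i ≥ 1} u^{q^i}/(θ^{q^i}-θ)^n`
defining the `n`-th Kochubei polylogarithm at `u`) is summable in `K_∞`. -/
theorem kochubeiLi_summable (Fq : Type*) [Field Fq] [Fintype Fq] [DecidableEq (RatFunc Fq)]
    (q : ℕ) (hq : Fintype.card Fq = q) (n : ℕ) (u : RatFunc.CompletionAtInfty Fq)
    (hu : Valued.v u < (↑(Multiplicative.ofAdd (n : ℤ)) : WithZero (Multiplicative ℤ))) :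
    Summable (fun i : ℕ =>
      u ^ q ^ (i + 1) /
        (ratFuncToFqtInfty Fq RatFunc.X ^ q ^ (i + 1) - ratFuncToFqtInfty Fq RatFunc.X) ^ n) := by
  have hq2 : 2 ≤ q := hq ▸ Fintype.one_lt_card
  haveI : NonarchimedeanAddGroup (RatFunc.CompletionAtInfty Fq) := kochubei_aux_nonarch
  haveI : CompleteSpace (RatFunc.CompletionAtInfty Fq) :=
    @UniformSpace.Completion.completeSpace (RatFunc Fq) (RatFunc.inftyValued Fq).toUniformSpace
  by_cases hu0 : u = 0
  · have : (fun i : ℕ =>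
        u ^ q ^ (i + 1) /
          (ratFuncToFqtInfty Fq RatFunc.X ^ q ^ (i + 1) - ratFuncToFqtInfty Fq RatFunc.X) ^ n)
        = fun _ => 0 := by
      funext i
      rw [hu0, zero_pow (Nat.pow_pos (show 0 < q by omega)).ne', zero_div]
    rw [this]
    exact summable_zero
  · apply NonarchimedeanAddGroup.summable_of_tendsto_cofinite_zero
    rw [Nat.cofinite_eq_atTop]
    rw [(Valued.hasBasis_nhds_zero (RatFunc.CompletionAtInfty Fq) (WithZero (Multiplicative ℤ))).tendsto_right_iff]
    intro γ _
    simp only [Set.mem_setOf_eq, Valuation.restrict_lt_iff_lt_embedding]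
    obtain ⟨γ, hγe⟩ := γ.isUnit.map MonoidWithZeroHom.ValueGroup₀.embedding
    rw [← hγe]
    -- v u = ofAdd k with k < n
    have hvu0 : Valued.v u ≠ 0 := by
      simpa only [ne_eq, map_eq_zero] using hu0
    obtain ⟨a, ha⟩ := WithZero.ne_zero_iff_exists.mp hvu0
    have hk : Multiplicative.toAdd a < (n : ℤ) := by
      rw [← ha] at hu
      exact_mod_cast WithZero.coe_lt_coe.mp hu
    -- γ as an integer bound
    set g : ℤ := Multiplicative.toAdd (WithZero.unitsWithZeroEquiv γ) with hg
    have hγ : (γ : WithZero (Multiplicative ℤ)) = ((Multiplicative.ofAdd g : Multiplicative ℤ) : WithZero (Multiplicative ℤ)) := by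
      rw [hg, ofAdd_toAdd]
      exact (WithZero.coe_unzero γ.ne_zero).symm
    filter_upwards [Filter.eventually_ge_atTop g.natAbs] with i hi
    set m : ℕ := q ^ (i + 1) with hmdef
    have hm2 : 2 ≤ m := le_trans hq2 (Nat.le_self_pow (by omega) q)
    have him : i + 1 ≤ m := (Nat.lt_pow_self (n := i + 1) hq2).le
    clear_value m
    -- compute the valuation of the term
    have hval : Valued.v (u ^ m /
        (ratFuncToFqtInfty Fq RatFunc.X ^ m - ratFuncToFqtInfty Fq RatFunc.X) ^ n)
        = ((Multiplicative.ofAdd ((m : ℤ) * (Multiplicative.toAdd a - n)) : Multiplicative ℤ) : WithZero (Multiplicative ℤ)) := by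
      rw [Valuation.map_div, map_pow, map_pow, ← ha, kochubei_aux_den Fq hm2]
      rw [← WithZero.coe_pow, ← WithZero.coe_pow, ← WithZero.coe_div, WithZero.coe_inj]
      rw [← ofAdd_toAdd a]
      rw [← ofAdd_nsmul, ← ofAdd_nsmul, ← ofAdd_sub]
      congr 1
      simp only [toAdd_ofAdd]
      ring
    show Valued.v _ < (γ : WithZero (Multiplicative ℤ))
    rw [hval, hγ, WithZero.coe_lt_coe, Multiplicative.ofAdd_lt]
    have h1 : (m : ℤ) * (Multiplicative.toAdd a - n) ≤ (m : ℤ) * (-1) := by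
      apply mul_le_mul_of_nonneg_left _ (by positivity)
      omega
    have h2 : -(m : ℤ) < g := by
      have : g.natAbs < m := by omega
      omega
    omega
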